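/- Let g₂, g₃ be complex numbers, and set x₀(B) = (16B⁶ + 360g₂B⁴ + 27000g₃B³ − 3375g₂²B² − 303750g₂g₃B − 84375g₂³ + 2278125g₃²)/(36B(4B² − 75g₂)²) and w(B) = (16B⁶ − 1800g₂B⁴ − 54000g₃B³ − 16875g₂²B² + 421875g₂³ − 11390625g₃²)/(27B²(4B² − 75g₂)³). Then for every B ∈ ℂ with B(4B² − 75g₂) ≠ 0, one has w(B)² · 𝖫₃(B) = 4x₀(B)³ − g₂x₀(B) − g₃, where 𝖫₃(B) = B(B⁶ − (63/2)g₂B⁴ + (297/2)g₃B³ + (4185/16)g₂²B² − (18225/8)g₂g₃B − (3375/16)g₂³ + (91125/16)g₃²). In other words, if (B, ν) lies on the ℓ=3 Lamé spectral curve ν² = 𝖫₃(B), then the image point (x₀(B), w(B)ν) of the Hermite–Krichever covering π₃ lies on the elliptic curve y² = 4x³ − g₂x − g₃. -/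

import Mathlib

set_option maxHeartbeats 4000000 in
/-- With
`x₀(B) = (16B⁶ + 360g₂B⁴ + 27000g₃B³ − 3375g₂²B² − 303750g₂g₃B − 84375g₂³ + 2278125g₃²)
          /(36B(4B² − 75g₂)²)` and
`w(B) = (16B⁶ − 1800g₂B⁴ − 54000g₃B³ − 16875g₂²B² + 421875g₂³ − 11390625g₃²)
          /(27B²(4B² − 75g₂)³)`,
for every `B` with `B(4B² − 75g₂) ≠ 0` one has `w(B)² ⬝ 𝖫₃(B) = 4x₀(B)³ − g₂x₀(B) − g₃`,
where `𝖫₃(B) = B(B⁶ − (63/2)g₂B⁴ + (297/2)g₃B³ + (4185/16)g₂²B² − (18225/8)g₂g₃B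
− (3375/16)g₂³ + (91125/16)g₃²)`; hence if `(B, ν)` lies on the ℓ=3 Lamé spectral curve
`ν² = 𝖫₃(B)` then `(x₀(B), w(B)ν)` lies on `y² = 4x³ − g₂x − g₃`. -/
theorem lame_HK_covering_l3_lands_on_elliptic_curve (g₂ g₃ : ℂ) (B : ℂ)
    (hB : B * (4 * B ^ 2 - 75 * g₂) ≠ 0) :
    ((16 * B ^ 6 - 1800 * g₂ * B ^ 4 - 54000 * g₃ * B ^ 3 - 16875 * g₂ ^ 2 * B ^ 2
        + 421875 * g₂ ^ 3 - 11390625 * g₃ ^ 2)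
      / (27 * B ^ 2 * (4 * B ^ 2 - 75 * g₂) ^ 3)) ^ 2
      * (B * (B ^ 6 - (63 / 2) * g₂ * B ^ 4 + (297 / 2) * g₃ * B ^ 3
          + (4185 / 16) * g₂ ^ 2 * B ^ 2 - (18225 / 8) * g₂ * g₃ * B
          - (3375 / 16) * g₂ ^ 3 + (91125 / 16) * g₃ ^ 2))
      = 4 * ((16 * B ^ 6 + 360 * g₂ * B ^ 4 + 27000 * g₃ * B ^ 3 - 3375 * g₂ ^ 2 * B ^ 2
              - 303750 * g₂ * g₃ * B - 84375 * g₂ ^ 3 + 2278125 * g₃ ^ 2)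
            / (36 * B * (4 * B ^ 2 - 75 * g₂) ^ 2)) ^ 3
        - g₂ * ((16 * B ^ 6 + 360 * g₂ * B ^ 4 + 27000 * g₃ * B ^ 3 - 3375 * g₂ ^ 2 * B ^ 2
                  - 303750 * g₂ * g₃ * B - 84375 * g₂ ^ 3 + 2278125 * g₃ ^ 2)
              / (36 * B * (4 * B ^ 2 - 75 * g₂) ^ 2))
        - g₃ ∧
    ∀ ν : ℂ,
      ν ^ 2 = B * (B ^ 6 - (63 / 2) * g₂ * B ^ 4 + (297 / 2) * g₃ * B ^ 3
          + (4185 / 16) * g₂ ^ 2 * B ^ 2 - (18225 / 8) * g₂ * g₃ * B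
          - (3375 / 16) * g₂ ^ 3 + (91125 / 16) * g₃ ^ 2) →
      ((16 * B ^ 6 - 1800 * g₂ * B ^ 4 - 54000 * g₃ * B ^ 3 - 16875 * g₂ ^ 2 * B ^ 2
          + 421875 * g₂ ^ 3 - 11390625 * g₃ ^ 2)
        / (27 * B ^ 2 * (4 * B ^ 2 - 75 * g₂) ^ 3) * ν) ^ 2
        = 4 * ((16 * B ^ 6 + 360 * g₂ * B ^ 4 + 27000 * g₃ * B ^ 3 - 3375 * g₂ ^ 2 * B ^ 2
                - 303750 * g₂ * g₃ * B - 84375 * g₂ ^ 3 + 2278125 * g₃ ^ 2)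
              / (36 * B * (4 * B ^ 2 - 75 * g₂) ^ 2)) ^ 3
          - g₂ * ((16 * B ^ 6 + 360 * g₂ * B ^ 4 + 27000 * g₃ * B ^ 3 - 3375 * g₂ ^ 2 * B ^ 2
                    - 303750 * g₂ * g₃ * B - 84375 * g₂ ^ 3 + 2278125 * g₃ ^ 2)
                / (36 * B * (4 * B ^ 2 - 75 * g₂) ^ 2))
          - g₃ := by
  have hB1 : B ≠ 0 := fun h => hB (by rw [h]; ring)
  have hB2 : (4 * B ^ 2 - 75 * g₂) ≠ 0 := fun h => hB (by rw [h]; ring)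
  set Nx := 16 * B ^ 6 + 360 * g₂ * B ^ 4 + 27000 * g₃ * B ^ 3 - 3375 * g₂ ^ 2 * B ^ 2
      - 303750 * g₂ * g₃ * B - 84375 * g₂ ^ 3 + 2278125 * g₃ ^ 2 with hNx
  set Nw := 16 * B ^ 6 - 1800 * g₂ * B ^ 4 - 54000 * g₃ * B ^ 3 - 16875 * g₂ ^ 2 * B ^ 2
      + 421875 * g₂ ^ 3 - 11390625 * g₃ ^ 2 with hNw
  set L := B * (B ^ 6 - (63 / 2) * g₂ * B ^ 4 + (297 / 2) * g₃ * B ^ 3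
      + (4185 / 16) * g₂ ^ 2 * B ^ 2 - (18225 / 8) * g₂ * g₃ * B
      - (3375 / 16) * g₂ ^ 3 + (91125 / 16) * g₃ ^ 2) with hL
  set D1 := 27 * B ^ 2 * (4 * B ^ 2 - 75 * g₂) ^ 3 with hD1d
  set D2 := 36 * B * (4 * B ^ 2 - 75 * g₂) ^ 2 with hD2d
  have hD1 : D1 ≠ 0 := by
    rw [hD1d]
    exact mul_ne_zero (mul_ne_zero (by norm_num) (pow_ne_zero 2 hB1)) (pow_ne_zero 3 hB2)
  have hD2 : D2 ≠ 0 := by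
    rw [hD2d]
    exact mul_ne_zero (mul_ne_zero (by norm_num) hB1) (pow_ne_zero 2 hB2)
  have key : (Nw / D1) ^ 2 * L = 4 * (Nx / D2) ^ 3 - g₂ * (Nx / D2) - g₃ := by
    have e1 : (Nw / D1) ^ 2 * L = Nw ^ 2 * L / D1 ^ 2 := by
      rw [div_pow]; ring
    have e2 : 4 * (Nx / D2) ^ 3 - g₂ * (Nx / D2) - g₃
        = (4 * Nx ^ 3 - g₂ * Nx * D2 ^ 2 - g₃ * D2 ^ 3) / D2 ^ 3 := by
      field_simp
    rw [e1, e2, div_eq_div_iff (pow_ne_zero 2 hD1) (pow_ne_zero 3 hD2)]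
    rw [hNx, hNw, hL, hD1d, hD2d]
    ring
  refine ⟨key, fun ν hν => ?_⟩
  rw [mul_pow, hν]
  exact key
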